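/- Let m ≥ 2 and let Δ be a graph with vertex set {1, −1, 2, −2, …, m, −m} that is preserved by the group ⟨τ⟩ × Sym(m) ≤ C2 ≀ Sym(m). Then Δ is isomorphic to K_m □ K_2, K_{m,m}, mK_2, K_{2m}, or the complement of one of these graphs. Moreover, if μ(Δ) = 4, then m ≥ 3 and Δ is isomorphic to K_m □ K_2 or to its complement. -/

import Mathlib

open Equiv Pointwise

/-- A graph is vertex-transitive if its automorphism group is transitive on the
vertices. -/
def IsVertexTransitive {V : Type*} (Γ : SimpleGraph V) : Prop :=
  ∀ u v : V, ∃ e : Γ ≃g Γ, e u = v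

/-- The motion of a graph: the least number of vertices moved by a non-identity
automorphism (i.e. the minimal degree of its automorphism group). -/
noncomputable def motion {V : Type*} [Fintype V] [DecidableEq V] (Γ : SimpleGraph V) : ℕ :=
  sInf {n | ∃ e : Γ ≃g Γ, (e.toEquiv : Equiv.Perm V) ≠ 1 ∧
    (Equiv.Perm.support (e.toEquiv : Equiv.Perm V)).card = n}

/-- The element of the imprimitive wreath product determined by a function
`g : ι → Perm Δ` and a permutation `h` of the index set, acting on `Δ × ι` by
`(δ, i) ↦ (g i δ, h i)`. -/
def wreathPerm {Δ ι : Type*} (g : ι → Equiv.Perm Δ) (h : Equiv.Perm ι) :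
    Equiv.Perm (Δ × ι) where
  toFun x := (g x.2 x.1, h x.2)
  invFun x := ((g (h⁻¹ x.2))⁻¹ x.1, h⁻¹ x.2)
  left_inv := by rintro ⟨d, i⟩; simp
  right_inv := by rintro ⟨d, i⟩; simp

/-- The imprimitive wreath product `Y ≀ H` of permutation groups, as a permutation
group on `Δ × ι`.  (The defining set is already a subgroup, so taking the
subgroup closure does not change it.) -/
def wreathProduct {Δ ι : Type*} (Y : Subgroup (Equiv.Perm Δ))
    (H : Subgroup (Equiv.Perm ι)) : Subgroup (Equiv.Perm (Δ × ι)) :=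
  Subgroup.closure {σ | ∃ (g : ι → Equiv.Perm Δ) (h : Equiv.Perm ι),
    (∀ i, g i ∈ Y) ∧ h ∈ H ∧ σ = wreathPerm g h}

/-- The copy `X^ι` of a power of `X` inside the base group of a wreath product,
as a permutation group on `Δ × ι`. -/
def basePower {Δ ι : Type*} (X : Subgroup (Equiv.Perm Δ)) :
    Subgroup (Equiv.Perm (Δ × ι)) :=
  Subgroup.closure {σ | ∃ g : ι → Equiv.Perm Δ, (∀ i, g i ∈ X) ∧ σ = wreathPerm g 1}

/-- Transport of permutations along a bijection, as a group isomorphism. -/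
def permMapEquiv {α β : Type*} (f : α ≃ β) : Equiv.Perm α ≃* Equiv.Perm β where
  toFun g := (f.symm.trans g).trans f
  invFun g := (f.trans g).trans f.symm
  left_inv g := by ext x; simp
  right_inv g := by ext x; simp
  map_mul' g₁ g₂ := by ext x; simp [Equiv.Perm.mul_apply]

/-- Transport of a permutation group along a bijection of the underlying sets.
`mapPermGroup f G` is the permutation group on `β` corresponding to `G` under the
relabelling `f`; thus `G` and `mapPermGroup f G` are permutation isomorphic. -/
def mapPermGroup {α β : Type*} (f : α ≃ β) (G : Subgroup (Equiv.Perm α)) :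
    Subgroup (Equiv.Perm β) :=
  Subgroup.map (permMapEquiv f).toMonoidHom G

/-- The full wreath product `C₂ ≀ Sym(m)` acting on `Fin 2 × Fin m` (the set
`{1, -1, …, m, -m}`), where the `i`-th base coordinate swaps `(0,i)` and `(1,i)`
and `Sym(m)` permutes the pairs. -/
def fullC2Wreath (m : ℕ) : Subgroup (Equiv.Perm (Fin 2 × Fin m)) :=
  Subgroup.closure {σ | ∃ (g : Fin m → Equiv.Perm (Fin 2)) (h : Equiv.Perm (Fin m)),
    σ = wreathPerm g h}

/-- The subgroup `{1} × Sym(m)` of `C₂ ≀ Sym(m)`. -/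
def symPart (m : ℕ) : Subgroup (Equiv.Perm (Fin 2 × Fin m)) :=
  Subgroup.closure {σ | ∃ h : Equiv.Perm (Fin m), σ = wreathPerm (fun _ => 1) h}

/-- The superflip `τ`: the base-group element swapping `i` and `-i` for every `i`. -/
def superflip (m : ℕ) : Equiv.Perm (Fin 2 × Fin m) :=
  wreathPerm (fun _ => Equiv.swap 0 1) 1

/-- The subgroup `⟨τ⟩ × Sym(m)` of `C₂ ≀ Sym(m)`. -/
def flipSym (m : ℕ) : Subgroup (Equiv.Perm (Fin 2 × Fin m)) :=
  Subgroup.zpowers (superflip m) ⊔ symPart m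

/-- The augmentation subgroup `(C₂^m)⁺ × {1}` of the base group of `C₂ ≀ Sym(m)`:
tuples with an even number of non-trivial entries. -/
def evenBase (m : ℕ) : Subgroup (Equiv.Perm (Fin 2 × Fin m)) :=
  Subgroup.closure {σ | ∃ g : Fin m → Equiv.Perm (Fin 2),
    Even (Finset.univ.filter (fun i => g i ≠ 1)).card ∧ σ = wreathPerm g 1}

/-- The subgroup `(C₂^m)⁺ ⋊ Sym(m)` of `C₂ ≀ Sym(m)`. -/
def evenWreath (m : ℕ) : Subgroup (Equiv.Perm (Fin 2 × Fin m)) :=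
  evenBase m ⊔ symPart m

/-- The full automorphism group of a graph, as a subgroup of the symmetric group on
its vertex set. -/
def autGroup {V : Type*} (Γ : SimpleGraph V) : Subgroup (Equiv.Perm V) where
  carrier := {σ | ∀ u v : V, Γ.Adj (σ u) (σ v) ↔ Γ.Adj u v}
  one_mem' := by intro u v; rfl
  mul_mem' := by
    intro a b ha hb u v
    simp only [Set.mem_setOf_eq] at *
    rw [Equiv.Perm.mul_apply, Equiv.Perm.mul_apply, ha, hb]
  inv_mem' := by
    intro a ha u v
    simp only [Set.mem_setOf_eq] at *
    rw [← ha (a⁻¹ u) (a⁻¹ v)]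
    simp

/-- The 5-cycle `C₅`, as a graph on `ZMod 5`. -/
def C5 : SimpleGraph (ZMod 5) := SimpleGraph.fromRel (fun x y => x - y = 1)

/-- The perfect matching `m K₂` on the vertex set `Fin 2 × Fin m`. -/
def matching (m : ℕ) : SimpleGraph (Fin 2 × Fin m) :=
  SimpleGraph.fromRel (fun x y => x.2 = y.2 ∧ x.1 ≠ y.1)

/-- The Cartesian product `K_m □ K₂` on the vertex set `Fin 2 × Fin m`. -/
def prism (m : ℕ) : SimpleGraph (Fin 2 × Fin m) :=
  SimpleGraph.fromRel (fun x y => (x.2 = y.2 ∧ x.1 ≠ y.1) ∨ (x.1 = y.1 ∧ x.2 ≠ y.2))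

/-- The complete bipartite graph `K_{m,m}` on the vertex set `Fin 2 × Fin m`. -/
def completeBip (m : ℕ) : SimpleGraph (Fin 2 × Fin m) :=
  SimpleGraph.fromRel (fun x y => x.1 ≠ y.1)

private lemma exists_perm_two (m : ℕ) (i0 i1 i j : Fin m) (h01 : i0 ≠ i1) (hij : i ≠ j) :
    ∃ h : Equiv.Perm (Fin m), h i0 = i ∧ h i1 = j := by
  refine ⟨(Equiv.swap (Equiv.swap i0 i i1) j) * (Equiv.swap i0 i), ?_, ?_⟩
  · simp only [Equiv.Perm.mul_apply, Equiv.swap_apply_left]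
    apply Equiv.swap_apply_of_ne_of_ne _ hij
    intro hc
    apply h01
    have := (Equiv.swap i0 i).injective (a₁ := i1) (a₂ := i0)
    exact (this (by rw [← hc, Equiv.swap_apply_left])).symm ▸ rfl
  · simp only [Equiv.Perm.mul_apply, Equiv.swap_apply_left]

private lemma swap_adj_iff {V : Type*} [DecidableEq V] (Γ : SimpleGraph V) (u v : V)
    (h : ∀ w, w ≠ u → w ≠ v → (Γ.Adj u w ↔ Γ.Adj v w)) (x y : V) :
    Γ.Adj (Equiv.swap u v x) (Equiv.swap u v y) ↔ Γ.Adj x y := by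
  have h' : ∀ w, w ≠ u → w ≠ v → (Γ.Adj w u ↔ Γ.Adj w v) := by
    intro w h1 h2
    rw [Γ.adj_comm w u, Γ.adj_comm w v]
    exact h w h1 h2
  have key : ∀ x y, Γ.Adj x y → Γ.Adj (Equiv.swap u v x) (Equiv.swap u v y) := by
    intro x y hxy
    by_cases hxu : x = u <;> by_cases hxv : x = v <;>
      by_cases hyu : y = u <;> by_cases hyv : y = v <;>
      subst_vars <;>
      simp_all [Equiv.swap_apply_left, Equiv.swap_apply_right, Equiv.swap_apply_of_ne_of_ne,
        SimpleGraph.adj_comm]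
  constructor
  · intro hxy
    have := key _ _ hxy
    simpa using this
  · exact key x y

private def isoOfAdjIff {V : Type*} {Γ Γ' : SimpleGraph V} (h : ∀ x y, Γ'.Adj x y ↔ Γ.Adj x y) :
    Γ ≃g Γ' := ⟨Equiv.refl V, fun {x y} => h x y⟩

private lemma motion_le_two {V : Type*} [Fintype V] [DecidableEq V] (Γ : SimpleGraph V)
    (u v : V) (huv : u ≠ v)
    (h : ∀ w, w ≠ u → w ≠ v → (Γ.Adj u w ↔ Γ.Adj v w)) : motion Γ ≤ 2 := by
  apply Nat.sInf_le
  refine ⟨⟨Equiv.swap u v, fun {x y} => swap_adj_iff Γ u v h x y⟩, ?_, ?_⟩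
  · simp [huv]
  · rw [show ((⟨Equiv.swap u v, fun {x y} => swap_adj_iff Γ u v h x y⟩ : Γ ≃g Γ).toEquiv : Equiv.Perm V) = Equiv.swap u v from rfl,
      Equiv.Perm.support_swap huv]
    simp [huv]

/-- Lemma `lem:graphs_easySF`.  A graph on
`{1, -1, …, m, -m}` (`m ≥ 2`) preserved by `⟨τ⟩ × Sym(m)` is isomorphic to
`K_m □ K₂`, `K_{m,m}`, `m K₂`, `K_{2m}`, or a complement of one of these; and if its
motion is 4, then `m ≥ 3` and it is `K_m □ K₂` or its complement. -/
theorem statement_15 (m : ℕ) (hm : 2 ≤ m) (Δ : SimpleGraph (Fin 2 × Fin m))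
    (hpres : flipSym m ≤ autGroup Δ) :
    (Nonempty (Δ ≃g prism m) ∨ Nonempty (Δ ≃g completeBip m) ∨
     Nonempty (Δ ≃g matching m) ∨
     Nonempty (Δ ≃g (⊤ : SimpleGraph (Fin 2 × Fin m))) ∨
     Nonempty (Δ ≃g (prism m)ᶜ) ∨ Nonempty (Δ ≃g (completeBip m)ᶜ) ∨
     Nonempty (Δ ≃g (matching m)ᶜ) ∨
     Nonempty (Δ ≃g (⊥ : SimpleGraph (Fin 2 × Fin m)))) ∧
    (motion Δ = 4 →
      3 ≤ m ∧ (Nonempty (Δ ≃g prism m) ∨ Nonempty (Δ ≃g (prism m)ᶜ))) := by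

  have h01 : (⟨0, by omega⟩ : Fin m) ≠ ⟨1, by omega⟩ := by simp [Fin.ext_iff]
  set i0 : Fin m := ⟨0, by omega⟩ with hi0def
  set i1 : Fin m := ⟨1, by omega⟩ with hi1def
  have hA : ∀ σ ∈ flipSym m, ∀ u v, Δ.Adj (σ u) (σ v) ↔ Δ.Adj u v := fun σ hσ => hpres hσ
  have hsym : ∀ h : Equiv.Perm (Fin m), wreathPerm (fun _ => 1) h ∈ flipSym m := fun h =>
    Subgroup.mem_sup_right (Subgroup.subset_closure ⟨h, rfl⟩)
  have htau : superflip m ∈ flipSym m := Subgroup.mem_sup_left (Subgroup.mem_zpowers _)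
  -- homogeneity
  have hM : ∀ (a b : Fin 2) (i : Fin m), a ≠ b →
      (Δ.Adj (a, i) (b, i) ↔ Δ.Adj (0, i0) (1, i0)) := by
    intro a b i hab
    have key : Δ.Adj (0, i) (1, i) ↔ Δ.Adj (0, i0) (1, i0) := by
      have := hA _ (hsym (Equiv.swap i0 i)) (0, i0) (1, i0)
      simpa [wreathPerm, Equiv.swap_apply_left] using this
    have hc : (a = 0 ∧ b = 1) ∨ (a = 1 ∧ b = 0) := by omega
    rcases hc with ⟨ha, hb⟩ | ⟨ha, hb⟩ <;> subst ha <;> subst hb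
    · exact key
    · rw [Δ.adj_comm]; exact key
  have hS : ∀ (a : Fin 2) (i j : Fin m), i ≠ j →
      (Δ.Adj (a, i) (a, j) ↔ Δ.Adj (0, i0) (0, i1)) := by
    intro a i j hij
    obtain ⟨h, hh0, hh1⟩ := exists_perm_two m i0 i1 i j h01 hij
    have hc : a = 0 ∨ a = 1 := by omega
    rcases hc with ha | ha <;> subst ha
    · have := hA _ (hsym h) (0, i0) (0, i1)
      simpa [wreathPerm, hh0, hh1] using this
    · have := hA _ ((flipSym m).mul_mem htau (hsym h)) (0, i0) (0, i1)
      simpa [wreathPerm, superflip, Equiv.Perm.mul_apply, hh0, hh1,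
        Equiv.swap_apply_left] using this
  have hC : ∀ (a b : Fin 2) (i j : Fin m), i ≠ j → a ≠ b →
      (Δ.Adj (a, i) (b, j) ↔ Δ.Adj (0, i0) (1, i1)) := by
    intro a b i j hij hab
    obtain ⟨h, hh0, hh1⟩ := exists_perm_two m i0 i1 i j h01 hij
    have hc : (a = 0 ∧ b = 1) ∨ (a = 1 ∧ b = 0) := by omega
    rcases hc with ⟨ha, hb⟩ | ⟨ha, hb⟩ <;> subst ha <;> subst hb
    · have := hA _ (hsym h) (0, i0) (1, i1)
      simpa [wreathPerm, hh0, hh1] using this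
    · have := hA _ ((flipSym m).mul_mem htau (hsym h)) (0, i0) (1, i1)
      simpa [wreathPerm, superflip, Equiv.Perm.mul_apply, hh0, hh1,
        Equiv.swap_apply_left, Equiv.swap_apply_right] using this
  have hchar : ∀ (a b : Fin 2) (i j : Fin m), Δ.Adj (a, i) (b, j) ↔
      ((i = j ∧ a ≠ b ∧ Δ.Adj (0, i0) (1, i0)) ∨ (i ≠ j ∧ a = b ∧ Δ.Adj (0, i0) (0, i1)) ∨
        (i ≠ j ∧ a ≠ b ∧ Δ.Adj (0, i0) (1, i1))) := by
    intro a b i j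
    by_cases hij : i = j <;> by_cases hab : a = b
    · subst hij; subst hab; simp [SimpleGraph.irrefl]
    · subst hij; rw [hM a b i hab]; simp [hab]
    · subst hab; rw [hS a i j hij]; simp [hij]
    · rw [hC a b i j hij hab]; simp [hij, hab]
  -- the classifying isomorphisms, as reusable facts
  have mkIso : ∀ (Γ : SimpleGraph (Fin 2 × Fin m)),
      (∀ (a b : Fin 2) (i j : Fin m), Γ.Adj (a, i) (b, j) ↔ Δ.Adj (a, i) (b, j)) →
      Nonempty (Δ ≃g Γ) := by
    intro Γ hΓ
    exact ⟨isoOfAdjIff (fun x y => by obtain ⟨a, i⟩ := x; obtain ⟨b, j⟩ := y; exact hΓ a b i j)⟩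
  constructor
  · by_cases hm0 : Δ.Adj (0, i0) (1, i0) <;>
      by_cases hs0 : Δ.Adj (0, i0) (0, i1) <;>
      by_cases hc0 : Δ.Adj (0, i0) (1, i1)
    · refine Or.inr (Or.inr (Or.inr (Or.inl (mkIso _ ?_))))
      intro a b i j
      rw [hchar]
      by_cases hij : i = j <;> by_cases hab : a = b <;>
        simp [hij, hab, hm0, hs0, hc0, Prod.ext_iff]
    · refine Or.inl (mkIso _ ?_)
      intro a b i j
      rw [hchar]
      by_cases hij : i = j <;> by_cases hab : a = b <;>
        simp [prism, SimpleGraph.fromRel_adj, hij, hab, hm0, hs0, hc0, Prod.ext_iff, eq_comm]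
    · refine Or.inr (Or.inl (mkIso _ ?_))
      intro a b i j
      rw [hchar]
      by_cases hij : i = j <;> by_cases hab : a = b <;>
        simp [completeBip, SimpleGraph.fromRel_adj, hij, hab, hm0, hs0, hc0, Prod.ext_iff, eq_comm]
    · refine Or.inr (Or.inr (Or.inl (mkIso _ ?_)))
      intro a b i j
      rw [hchar]
      by_cases hij : i = j <;> by_cases hab : a = b <;>
        simp [matching, SimpleGraph.fromRel_adj, hij, hab, hm0, hs0, hc0, Prod.ext_iff, eq_comm]
    · refine Or.inr (Or.inr (Or.inr (Or.inr (Or.inr (Or.inr (Or.inl (mkIso _ ?_)))))))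
      intro a b i j
      rw [hchar]
      by_cases hij : i = j <;> by_cases hab : a = b <;>
        simp [matching, SimpleGraph.fromRel_adj, hij, hab, hm0, hs0, hc0, Prod.ext_iff, eq_comm]
    · refine Or.inr (Or.inr (Or.inr (Or.inr (Or.inr (Or.inl (mkIso _ ?_))))))
      intro a b i j
      rw [hchar]
      by_cases hij : i = j <;> by_cases hab : a = b <;>
        simp [completeBip, SimpleGraph.fromRel_adj, hij, hab, hm0, hs0, hc0, Prod.ext_iff, eq_comm]
    · refine Or.inr (Or.inr (Or.inr (Or.inr (Or.inl (mkIso _ ?_)))))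
      intro a b i j
      rw [hchar]
      by_cases hij : i = j <;> by_cases hab : a = b <;>
        simp [prism, SimpleGraph.fromRel_adj, hij, hab, hm0, hs0, hc0, Prod.ext_iff, eq_comm]
    · refine Or.inr (Or.inr (Or.inr (Or.inr (Or.inr (Or.inr (Or.inr (mkIso _ ?_)))))))
      intro a b i j
      rw [hchar]
      by_cases hij : i = j <;> by_cases hab : a = b <;>
        simp [hij, hab, hm0, hs0, hc0, Prod.ext_iff]
  · intro h4
    -- motion 4 rules out eM ↔ eC
    have hMC : ¬ (Δ.Adj (0, i0) (1, i0) ↔ Δ.Adj (0, i0) (1, i1)) := by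
      intro hiff
      have hle := motion_le_two Δ (0, i0) (0, i1) (by simp [Prod.ext_iff, h01]) ?_
      · omega
      rintro ⟨c, k⟩ hw1 hw2
      simp only [ne_eq, Prod.mk.injEq, not_and] at hw1 hw2
      rw [hchar 0 c i0 k, hchar 0 c i1 k]
      clear hA hsym htau hM hS hC hchar mkIso hpres h4
      by_cases hk0 : i0 = k
      · subst hk0
        have hk1 : ¬ (i1 = i0) := fun hc => h01 hc.symm
        simp_all
        tauto
      · by_cases hk1 : i1 = k
        · subst hk1
          simp_all
          tauto
        · simp_all
    have hSC : ¬ (Δ.Adj (0, i0) (0, i1) ↔ Δ.Adj (0, i0) (1, i1)) := by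
      intro hiff
      have hle := motion_le_two Δ (0, i0) (1, i0) (by simp [Prod.ext_iff]) ?_
      · omega
      rintro ⟨c, k⟩ hw1 hw2
      simp only [ne_eq, Prod.mk.injEq, not_and] at hw1 hw2
      rw [hchar 0 c i0 k, hchar 1 c i0 k]
      clear hA hsym htau hM hS hC hchar mkIso hpres h4 hMC
      have hc : c = 0 ∨ c = 1 := by omega
      by_cases hk0 : i0 = k
      · subst hk0
        rcases hc with hcv | hcv <;> subst hcv <;> simp_all
      · rcases hc with hcv | hcv <;> subst hcv <;> simp_all <;> tauto
    have hm3 : 3 ≤ m := by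
      by_contra h3
      have hm2 : m = 2 := by omega
      subst hm2
      have hle := motion_le_two Δ (0, i0) (1, i1) (by simp [Prod.ext_iff]) ?_
      · omega
      rintro ⟨c, k⟩ hw1 hw2
      simp only [ne_eq, Prod.mk.injEq, not_and] at hw1 hw2
      rw [hchar 0 c i0 k, hchar 1 c i1 k]
      have hMS : Δ.Adj (0, i0) (1, i0) ↔ Δ.Adj (0, i0) (0, i1) := by tauto
      clear hA hsym htau hM hS hC hchar mkIso hpres h4 hMC hSC
      have hk : k = i0 ∨ k = i1 := by omega
      have hc : c = 0 ∨ c = 1 := by omega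
      rcases hk with hkv | hkv <;> subst hkv <;> rcases hc with hcv | hcv <;> subst hcv <;>
        simp_all <;> tauto
    refine ⟨hm3, ?_⟩
    by_cases hm0 : Δ.Adj (0, i0) (1, i0)
    · have hs0 : Δ.Adj (0, i0) (0, i1) := by tauto
      have hc0 : ¬ Δ.Adj (0, i0) (1, i1) := by tauto
      refine Or.inl (mkIso _ ?_)
      intro a b i j
      rw [hchar]
      by_cases hij : i = j <;> by_cases hab : a = b <;>
        simp [prism, SimpleGraph.fromRel_adj, hij, hab, hm0, hs0, hc0, Prod.ext_iff, eq_comm]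
    · have hs0 : ¬ Δ.Adj (0, i0) (0, i1) := by tauto
      have hc0 : Δ.Adj (0, i0) (1, i1) := by tauto
      refine Or.inr (mkIso _ ?_)
      intro a b i j
      rw [hchar]
      by_cases hij : i = j <;> by_cases hab : a = b <;>
        simp [prism, SimpleGraph.fromRel_adj, hij, hab, hm0, hs0, hc0, Prod.ext_iff, eq_comm]
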